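/- For any complex number a and τ tending to 0 along the positive imaginary axis, ϑ₀₁(τ, aτ) is asymptotic to (−iτ)^{−1/2} · 2cos(aπ) · e^{−πi/(4τ)}; that is, the ratio tends to 1 as τ ↓ 0. -/

import Mathlib

open Real Complex Filter Topology

noncomputable section

noncomputable def theta00 (τ z : ℂ) : ℂ :=
  ∑' n : ℤ, Complex.exp (2*(π:ℂ)*Complex.I*(n:ℂ)*z) *
    Complex.exp (2*(π:ℂ)*Complex.I*τ*((n:ℂ)^2/2))

noncomputable def theta01 (τ z : ℂ) : ℂ :=
  ∑' n : ℤ, (-1:ℂ)^n * Complex.exp (2*(π:ℂ)*Complex.I*(n:ℂ)*z) *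
    Complex.exp (2*(π:ℂ)*Complex.I*τ*((n:ℂ)^2/2))

noncomputable def theta10 (τ z : ℂ) : ℂ :=
  ∑' n : ℤ, Complex.exp (2*(π:ℂ)*Complex.I*((n:ℂ)+1/2)*z) *
    Complex.exp (2*(π:ℂ)*Complex.I*τ*((1/2)*((n:ℂ)+1/2)^2))

noncomputable def theta11 (τ z : ℂ) : ℂ :=
  Complex.I * ∑' n : ℤ, (-1:ℂ)^n * Complex.exp (2*(π:ℂ)*Complex.I*((n:ℂ)+1/2)*z) *
    Complex.exp (2*(π:ℂ)*Complex.I*τ*((1/2)*((n:ℂ)+1/2)^2))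

/-- `theta01` is the Jacobi theta function with `z` shifted by `1/2`. -/
lemma stmt17_theta01_eq (τ z : ℂ) : theta01 τ z = jacobiTheta₂ (z + 1/2) τ := by
  rw [theta01, jacobiTheta₂]
  refine tsum_congr fun n => ?_
  rw [jacobiTheta₂_term,
    show 2*(π:ℂ)*Complex.I*(n:ℂ)*(z+1/2) + (π:ℂ)*Complex.I*(n:ℂ)^2*τ
      = (n:ℂ)*((π:ℂ)*Complex.I) + (2*(π:ℂ)*Complex.I*(n:ℂ)*z + 2*(π:ℂ)*Complex.I*τ*((n:ℂ)^2/2))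
      by ring,
    Complex.exp_add, Complex.exp_int_mul, Complex.exp_pi_mul_I, Complex.exp_add]
  ring

/-- Explicit series expansion of the transformed theta function. -/
lemma stmt17_sum_eq (a : ℂ) (T : ℝ) (hT : 0 < T) :
    jacobiTheta₂ ((a*(Complex.I*T)+1/2)/(Complex.I*T)) (-1/(Complex.I*T))
      = ∑' n : ℤ, Complex.exp (2*(π:ℂ)*Complex.I*(n:ℂ)*a) *
          Complex.exp (((π*((n:ℝ) - (n:ℝ)^2)/T : ℝ) : ℂ)) := by
  rw [jacobiTheta₂]
  refine tsum_congr fun n => ?_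
  rw [jacobiTheta₂_term, ← Complex.exp_add]
  congr 1
  have hT0 : (T:ℂ) ≠ 0 := by exact_mod_cast hT.ne'
  have hI : Complex.I ≠ 0 := Complex.I_ne_zero
  push_cast
  field_simp
  ring

/-- Dominated convergence: the transformed theta series tends to `1 + e^{2πia}`. -/
lemma stmt17_tendsto_sum (a : ℂ) :
    Filter.Tendsto (fun T : ℝ => ∑' n : ℤ, Complex.exp (2*(π:ℂ)*Complex.I*(n:ℂ)*a) *
          Complex.exp (((π*((n:ℝ) - (n:ℝ)^2)/T : ℝ) : ℂ)))
      (nhdsWithin 0 (Set.Ioi 0))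
      (nhds (1 + Complex.exp (2*(π:ℂ)*Complex.I*a))) := by
  set g : ℤ → ℂ := fun n => (if n = 0 then 1 else 0) +
      (if n = 1 then Complex.exp (2*(π:ℂ)*Complex.I*a) else 0) with hg
  have hsumg : ∑' n : ℤ, g n = 1 + Complex.exp (2*(π:ℂ)*Complex.I*a) := by
    rw [hg, Summable.tsum_add (hasSum_ite_eq 0 1).summable
      (hasSum_ite_eq 1 (Complex.exp (2*(π:ℂ)*Complex.I*a))).summable,
      tsum_ite_eq, tsum_ite_eq]
  rw [← hsumg]
  set S : ℝ := |a.im| + 1/2 with hS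
  refine tendsto_tsum_of_dominated_convergence
    (bound := fun n : ℤ => rexp (-π * (1 * (n:ℝ)^2 - 2*S*|(n:ℝ)|))) ?_ ?_ ?_
  · have := summable_pow_mul_jacobiTheta₂_term_bound S one_pos 0
    simpa using this
  · intro n
    rcases eq_or_ne n 0 with rfl | h0
    · simpa [g] using tendsto_const_nhds
    rcases eq_or_ne n 1 with rfl | h1
    · simpa [g] using tendsto_const_nhds
    have hgn : g n = 0 := by simp [g, h0, h1]
    rw [hgn]
    have h2 : (n:ℝ) - (n:ℝ)^2 < 0 := by
      rcases lt_or_gt_of_ne h0 with h | h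
      · have h' : (n:ℝ) ≤ -1 := by exact_mod_cast (by omega : n ≤ -1)
        nlinarith
      · have h' : (2:ℝ) ≤ (n:ℝ) := by exact_mod_cast (by omega : (2:ℤ) ≤ n)
        nlinarith
    have hc : π * ((n:ℝ) - (n:ℝ)^2) < 0 := by nlinarith [Real.pi_pos]
    have hdiv : Tendsto (fun T : ℝ => π * ((n:ℝ) - (n:ℝ)^2) / T)
        (nhdsWithin 0 (Set.Ioi 0)) atBot := by
      have h1' : Tendsto (fun T : ℝ => (-(π * ((n:ℝ) - (n:ℝ)^2))) * T⁻¹)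
          (nhdsWithin 0 (Set.Ioi 0)) atTop :=
        Tendsto.const_mul_atTop (by linarith) tendsto_inv_nhdsGT_zero
      have := tendsto_neg_atTop_atBot.comp h1'
      refine this.congr fun T => ?_
      simp [Function.comp, div_eq_mul_inv]
    have hexp : Tendsto (fun T : ℝ => Complex.exp (((π*((n:ℝ) - (n:ℝ)^2)/T : ℝ) : ℂ)))
        (nhdsWithin 0 (Set.Ioi 0)) (nhds 0) := by
      have h3 : Tendsto (fun T : ℝ => rexp (π*((n:ℝ) - (n:ℝ)^2)/T))
          (nhdsWithin 0 (Set.Ioi 0)) (nhds 0) := Real.tendsto_exp_atBot.comp hdiv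
      have h4 := (Complex.continuous_ofReal.tendsto 0).comp h3
      refine h4.congr fun T => ?_
      simp [Function.comp, Complex.ofReal_exp]
    simpa using (tendsto_const_nhds (x := Complex.exp (2*(π:ℂ)*Complex.I*(n:ℂ)*a))).mul hexp
  · filter_upwards [Ioc_mem_nhdsGT one_pos] with T hT
    intro n
    have hT0 : 0 < T := hT.1
    have hT1 : T ≤ 1 := hT.2
    have hnorm : ‖Complex.exp (2*(π:ℂ)*Complex.I*(n:ℂ)*a) *
        Complex.exp (((π*((n:ℝ) - (n:ℝ)^2)/T : ℝ) : ℂ))‖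
        = rexp (-(2*π*(n:ℝ)*a.im)) * rexp (π*((n:ℝ) - (n:ℝ)^2)/T) := by
      rw [norm_mul, Complex.norm_exp,
        Complex.norm_exp]
      congr 2
      simp [Complex.mul_re, Complex.mul_im]
      try ring
    rw [hnorm, ← Real.exp_add, Real.exp_le_exp]
    have hc0 : π * ((n:ℝ) - (n:ℝ)^2) ≤ 0 := by
      have : (n:ℝ) - (n:ℝ)^2 ≤ 0 := by
        have h : n ≤ n^2 := by nlinarith [sq_nonneg n, sq_nonneg (n-1)]
        have h' : (n:ℝ) ≤ (n:ℝ)^2 := by exact_mod_cast h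
        linarith
      nlinarith [Real.pi_pos]
    have hdivle : π*((n:ℝ) - (n:ℝ)^2)/T ≤ π*((n:ℝ) - (n:ℝ)^2) := by
      rw [div_le_iff₀ hT0]
      nlinarith
    have habs1 : -(2*π*(n:ℝ)*a.im) ≤ 2*π* |(n:ℝ)| * |a.im| := by
      have : -((n:ℝ)*a.im) ≤ |(n:ℝ)*a.im| := neg_le_abs _
      rw [abs_mul] at this
      nlinarith [Real.pi_pos]
    have hnabs : (n:ℝ) ≤ |(n:ℝ)| := le_abs_self _
    have hpin : π * (n:ℝ) ≤ π * |(n:ℝ)| := mul_le_mul_of_nonneg_left hnabs Real.pi_pos.le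
    simp only [hS]
    nlinarith [Real.pi_pos, abs_nonneg ((n:ℝ)), habs1, hdivle, hpin]

theorem stmt17 (a : ℂ) (ha : ∀ k : ℤ, a ≠ 1/2 + (k:ℂ)) :
    Filter.Tendsto (fun T : ℝ =>
        theta01 (Complex.I*T) (a*(Complex.I*T)) /
          ((-Complex.I*(Complex.I*(T:ℂ))) ^ (-(1/2) : ℂ) * (2 * Complex.cos (a*(π:ℂ))) *
            Complex.exp (-((π:ℂ)*Complex.I)/(4*(Complex.I*(T:ℂ))))))
      (nhdsWithin 0 (Set.Ioi 0)) (nhds 1) := by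
  have hC : Complex.cos (a*(π:ℂ)) ≠ 0 := by
    rw [Ne, Complex.cos_eq_zero_iff]
    rintro ⟨k, hk⟩
    apply ha k
    have hπ : (π:ℂ) ≠ 0 := by exact_mod_cast Real.pi_ne_zero
    field_simp at hk
    have h2 : a * 2 = 2*(k:ℂ)+1 := by linear_combination hk
    linear_combination h2 / 2
  have h2C : 2 * Complex.cos (a*(π:ℂ)) ≠ 0 := mul_ne_zero two_ne_zero hC
  set W : ℝ → ℂ := fun T => ∑' n : ℤ, Complex.exp (2*(π:ℂ)*Complex.I*(n:ℂ)*a) *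
      Complex.exp (((π*((n:ℝ) - (n:ℝ)^2)/T : ℝ) : ℂ)) with hWdef
  have hG : Tendsto (fun T : ℝ => Complex.exp (-(π:ℂ)*Complex.I*a^2*(Complex.I*T)) *
      (Complex.exp (-(π:ℂ)*Complex.I*a) * W T) / (2 * Complex.cos (a*(π:ℂ))))
      (nhdsWithin 0 (Set.Ioi 0)) (nhds 1) := by
    have hE1 : Tendsto (fun T : ℝ => Complex.exp (-(π:ℂ)*Complex.I*a^2*(Complex.I*T)))
        (nhdsWithin 0 (Set.Ioi 0)) (nhds 1) := by
      have hcont : Continuous fun T : ℝ =>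
          Complex.exp (-(π:ℂ)*Complex.I*a^2*(Complex.I*T)) := by
        fun_prop
      have h0 : Tendsto (fun T : ℝ => Complex.exp (-(π:ℂ)*Complex.I*a^2*(Complex.I*T)))
          (nhdsWithin (0:ℝ) (Set.Ioi 0))
          (nhds (Complex.exp (-(π:ℂ)*Complex.I*a^2*(Complex.I*((0:ℝ):ℂ))))) :=
        (hcont.tendsto 0).mono_left nhdsWithin_le_nhds
      simpa using h0
    have hWt : Tendsto W (nhdsWithin 0 (Set.Ioi 0))
        (nhds (1 + Complex.exp (2*(π:ℂ)*Complex.I*a))) := stmt17_tendsto_sum a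
    have hlim := (hE1.mul ((tendsto_const_nhds
        (x := Complex.exp (-(π:ℂ)*Complex.I*a))).mul hWt)).div_const
      (2 * Complex.cos (a*(π:ℂ)))
    have hval : Complex.exp (-(π:ℂ)*Complex.I*a) * (1 + Complex.exp (2*(π:ℂ)*Complex.I*a))
        = 2 * Complex.cos (a*(π:ℂ)) := by
      rw [Complex.cos, mul_add, mul_one, ← Complex.exp_add]
      ring_nf
    rw [hval] at hlim
    have h1 : (1 : ℂ) * (2 * Complex.cos (a*(π:ℂ))) / (2 * Complex.cos (a*(π:ℂ))) = 1 := by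
      field_simp
    rwa [h1] at hlim
  refine Tendsto.congr' ?_ hG
  filter_upwards [self_mem_nhdsWithin] with T hT
  have hTpos : (0:ℝ) < T := hT
  have hT0 : (T:ℂ) ≠ 0 := by exact_mod_cast hTpos.ne'
  have hIT : Complex.I*(T:ℂ) ≠ 0 := mul_ne_zero Complex.I_ne_zero hT0
  have hX : -Complex.I*(Complex.I*(T:ℂ)) = (T:ℂ) := by
    rw [show -Complex.I*(Complex.I*(T:ℂ)) = -(Complex.I*Complex.I)*(T:ℂ) by ring,
      Complex.I_mul_I]
    ring
  have hXp : ((T:ℂ)) ^ ((1/2) : ℂ) ≠ 0 := by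
    rw [Complex.cpow_def_of_ne_zero hT0]
    exact Complex.exp_ne_zero _
  have hsplit : Complex.exp (-(π:ℂ)*Complex.I*(a*(Complex.I*T)+1/2)^2/(Complex.I*T))
      = Complex.exp (-(π:ℂ)*Complex.I*a^2*(Complex.I*T)) * Complex.exp (-(π:ℂ)*Complex.I*a) *
        Complex.exp (-((π:ℂ)*Complex.I)/(4*(Complex.I*(T:ℂ)))) := by
    rw [← Complex.exp_add, ← Complex.exp_add]
    congr 1
    field_simp
    ring
  have hE3 : Complex.exp (-((π:ℂ)*Complex.I)/(4*(Complex.I*(T:ℂ)))) ≠ 0 :=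
    Complex.exp_ne_zero _
  symm
  rw [stmt17_theta01_eq, jacobiTheta₂_functional_equation, stmt17_sum_eq a T hTpos,
    hX, hsplit, Complex.cpow_neg]
  simp only [hWdef]
  field_simp

end
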